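/- For t ∈ ℂ, consider the homogeneous cubic F_t(x,y,z) = x(x² + z² + 2zy) − t·z(x² − y²). There exists a point (x,y,z) ∈ ℂ³ ∖ {(0,0,0)} at which all three partial derivatives ∂F_t/∂x, ∂F_t/∂y, ∂F_t/∂z vanish if and only if t ∈ {0, 1, −1}. -/

import Mathlib

open MvPolynomial

private lemma pd_two (i : Fin 3) : MvPolynomial.pderiv i (2 : MvPolynomial (Fin 3) ℂ) = 0 := by
  rw [← map_ofNat (C : ℂ →+* MvPolynomial (Fin 3) ℂ) 2, pderiv_C]

private lemma deriv0 (t : ℂ) (p : Fin 3 → ℂ) :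
    MvPolynomial.eval p (MvPolynomial.pderiv 0
          (X 0 * (X 0 ^ 2 + X 2 ^ 2 + 2 * X 2 * X 1)
            - C t * (X 2 * (X 0 ^ 2 - X 1 ^ 2)) : MvPolynomial (Fin 3) ℂ)) =
      3 * p 0 ^ 2 + p 2 ^ 2 + 2 * p 2 * p 1 - 2 * t * p 0 * p 2 := by
  simp [pderiv_mul, pderiv_pow, pderiv_X, Pi.single_apply, pd_two]
  ring

private lemma deriv1 (t : ℂ) (p : Fin 3 → ℂ) :
    MvPolynomial.eval p (MvPolynomial.pderiv 1
          (X 0 * (X 0 ^ 2 + X 2 ^ 2 + 2 * X 2 * X 1)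
            - C t * (X 2 * (X 0 ^ 2 - X 1 ^ 2)) : MvPolynomial (Fin 3) ℂ)) =
      2 * p 2 * (p 0 + t * p 1) := by
  simp [pderiv_mul, pderiv_pow, pderiv_X, Pi.single_apply, pd_two]
  ring

private lemma deriv2 (t : ℂ) (p : Fin 3 → ℂ) :
    MvPolynomial.eval p (MvPolynomial.pderiv 2
          (X 0 * (X 0 ^ 2 + X 2 ^ 2 + 2 * X 2 * X 1)
            - C t * (X 2 * (X 0 ^ 2 - X 1 ^ 2)) : MvPolynomial (Fin 3) ℂ)) =
      2 * p 0 * p 2 + 2 * p 0 * p 1 - t * (p 0 ^ 2 - p 1 ^ 2) := by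
  simp [pderiv_mul, pderiv_pow, pderiv_X, Pi.single_apply, pd_two]
  ring

/-- The cubic `x(x² + z² + 2zy) − t·z(x² − y²)` has a nontrivial common zero of its three
partial derivatives iff `t ∈ {0, 1, −1}`. -/
theorem singular_fibres_gamma1_4 (t : ℂ) :
    (∃ p : Fin 3 → ℂ, p ≠ 0 ∧ ∀ i : Fin 3,
        MvPolynomial.eval p (MvPolynomial.pderiv i
          (X 0 * (X 0 ^ 2 + X 2 ^ 2 + 2 * X 2 * X 1)
            - C t * (X 2 * (X 0 ^ 2 - X 1 ^ 2)) : MvPolynomial (Fin 3) ℂ)) = 0) ↔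
      t = 0 ∨ t = 1 ∨ t = -1 := by
  constructor
  · rintro ⟨p, hp, h⟩
    set x := p 0 with hx0
    set y := p 1 with hy0
    set z := p 2 with hz0
    have e1 : 3 * x ^ 2 + z ^ 2 + 2 * z * y - 2 * t * x * z = 0 := by
      have := h 0; rwa [deriv0] at this
    have e2 : 2 * z * (x + t * y) = 0 := by
      have := h 1; rwa [deriv1] at this
    have e3 : 2 * x * z + 2 * x * y - t * (x ^ 2 - y ^ 2) = 0 := by
      have := h 2; rwa [deriv2] at this
    by_cases hz : z = 0
    · -- then 3x² = 0, so x = 0, and then t y² = 0 with y ≠ 0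
      have hx : x = 0 := by
        have hsq : x ^ 2 = 0 := by
          linear_combination e1 / 3 - (z + 2 * y - 2 * t * x) / 3 * hz
        exact pow_eq_zero_iff two_ne_zero |>.mp hsq
      have hy : y ≠ 0 := by
        intro hy
        apply hp
        funext i
        fin_cases i <;> simpa [← hx0, ← hy0, ← hz0] using by assumption
      have hty : t * y ^ 2 = 0 := by
        linear_combination e3 - (2 * z + 2 * y - t * x) * hx
      rcases mul_eq_zero.mp hty with h' | h'
      · exact Or.inl h'
      · exact absurd (pow_eq_zero_iff two_ne_zero |>.mp h') hy
    · -- z ≠ 0 : from e2, x + t y = 0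
      have hx : x + t * y = 0 := by
        rcases mul_eq_zero.mp e2 with h' | h'
        · exact absurd (by linear_combination h' / 2) hz
        · exact h'
      by_cases ht : t = 0
      · exact Or.inl ht
      have hy : y ≠ 0 := by
        intro hy
        have hx' : x = 0 := by linear_combination hx - t * hy
        have : z ^ 2 = 0 := by
          linear_combination e1 - (3 * x - 2 * t * z) * hx' - 2 * z * hy
        exact hz (pow_eq_zero_iff two_ne_zero |>.mp this)
      have h3' : t * (2 * y * z + y ^ 2 + t ^ 2 * y ^ 2) = 0 := by
        linear_combination (-1 : ℂ) * e3 + (2 * z + 2 * y - t * x + t ^ 2 * y) * hx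
      have e3' : 2 * y * z + y ^ 2 + t ^ 2 * y ^ 2 = 0 :=
        (mul_eq_zero.mp h3').resolve_left ht
      have key : (t ^ 2 - 1) ^ 2 * y ^ 4 = 0 := by
        linear_combination (-4 * y ^ 2 / 3) * e1
          + (4 * y ^ 2 * (3 * x - 3 * t * y - 2 * t * z) / 3) * hx
          + ((2 * y * z + 3 * y ^ 2 + 3 * t ^ 2 * y ^ 2) / 3) * e3'
      have ht2 : (t ^ 2 - 1) ^ 2 = 0 := by
        rcases mul_eq_zero.mp key with h' | h'
        · exact h'
        · exact absurd (pow_eq_zero_iff (by norm_num) |>.mp h') hy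
      have ht1 : (t - 1) * (t + 1) = 0 := by
        have := pow_eq_zero_iff two_ne_zero |>.mp ht2
        linear_combination this
      rcases mul_eq_zero.mp ht1 with h' | h'
      · exact Or.inr (Or.inl (by linear_combination h'))
      · exact Or.inr (Or.inr (by linear_combination h'))
  · rintro (rfl | rfl | rfl)
    · refine ⟨![0, 1, 0], ?_, ?_⟩
      · intro h; simpa using congrFun h 1
      · intro i
        fin_cases i
        exacts [(deriv0 (0 : ℂ) ![0, 1, 0]).trans (by norm_num [Matrix.cons_val_two]),
          (deriv1 (0 : ℂ) ![0, 1, 0]).trans (by norm_num),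
          (deriv2 (0 : ℂ) ![0, 1, 0]).trans (by norm_num)]
    · refine ⟨![-1, 1, -1], ?_, ?_⟩
      · intro h; simpa using congrFun h 1
      · intro i
        fin_cases i
        exacts [(deriv0 (1 : ℂ) ![-1, 1, -1]).trans (by norm_num [Matrix.cons_val_two]),
          (deriv1 (1 : ℂ) ![-1, 1, -1]).trans (by norm_num),
          (deriv2 (1 : ℂ) ![-1, 1, -1]).trans (by norm_num [Matrix.cons_val_two])]
    · refine ⟨![1, 1, -1], ?_, ?_⟩
      · intro h; simpa using congrFun h 1
      · intro i
        fin_cases i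
        exacts [(deriv0 (-1 : ℂ) ![1, 1, -1]).trans (by norm_num [Matrix.cons_val_two]),
          (deriv1 (-1 : ℂ) ![1, 1, -1]).trans (by norm_num),
          (deriv2 (-1 : ℂ) ![1, 1, -1]).trans (by norm_num [Matrix.cons_val_two])]
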